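/- Let H be a uniformly integrable set of real-valued random variables on a probability space (Ω, 𝓕, ℙ). Then there exists a continuously differentiable, strictly convex, nondecreasing function ψ : [0,∞) → [0,∞) with ψ(0) = 0 and ψ(s)/s → ∞ as s → ∞, such that sup_{X∈H} ∫_Ω ψ(|X|) dℙ < ∞ and the family {ψ(|X|) : X ∈ H} is again uniformly integrable, i.e. sup_{X∈H} ∫_{{ψ(|X|) > s}} ψ(|X|) dℙ → 0 as s → ∞. -/

import Mathlib

open MeasureTheory Filter Set Topology NNReal ENNReal

noncomputable def dvpPhi (t : ℝ) : ℝ := Real.sqrt (1 + max t 0 ^ 2) - 1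
noncomputable def dvpPhi' (t : ℝ) : ℝ := max t 0 / Real.sqrt (1 + max t 0 ^ 2)

lemma dvp_sq_pos (u : ℝ) : (0:ℝ) < 1 + u ^ 2 := by positivity

lemma dvp_sqrt_pos (u : ℝ) : 0 < Real.sqrt (1 + u ^ 2) :=
  Real.sqrt_pos.2 (dvp_sq_pos u)

lemma hasDerivAt_maxsq (t : ℝ) : HasDerivAt (fun s => max s 0 ^ 2) (2 * max t 0) t := by
  rcases lt_trichotomy t 0 with h | h | h
  · have : (fun s : ℝ => max s 0 ^ 2) =ᶠ[𝓝 t] fun _ => (0:ℝ) := by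
      filter_upwards [eventually_lt_nhds h] with s hs
      simp [max_eq_right hs.le]
    rw [max_eq_right h.le]
    simpa using (hasDerivAt_const t (0:ℝ)).congr_of_eventuallyEq this
  · subst h
    rw [max_self, mul_zero]
    rw [hasDerivAt_iff_isLittleO]
    rw [Asymptotics.isLittleO_iff]
    intro c hc
    filter_upwards [Metric.ball_mem_nhds (0:ℝ) hc] with s hs
    simp only [Metric.mem_ball, Real.dist_eq, sub_zero] at hs
    simp only [Real.norm_eq_abs]
    have h1 : |max s 0 ^ 2 - max (0:ℝ) 0 ^ 2 - (s - 0) * 0| ≤ |s| * |s| := by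
      simp only [mul_zero, sub_zero, max_self]
      rcases le_or_gt s 0 with hs' | hs'
      · rw [max_eq_right hs']
        norm_num
        exact mul_self_nonneg s
      · rw [max_eq_left hs'.le]
        simp only [ne_eq, OfNat.ofNat_ne_zero, not_false_eq_true, zero_pow, sub_zero]
        rw [← sq_abs, sq, abs_of_nonneg (by positivity : (0:ℝ) ≤ |s| * |s|)]
    calc |max s 0 ^ 2 - max (0:ℝ) 0 ^ 2 - (s - 0) * 0| ≤ |s| * |s| := h1
      _ ≤ c * |s - 0| := by rw [sub_zero]; nlinarith [abs_nonneg s]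
  · have : (fun s : ℝ => max s 0 ^ 2) =ᶠ[𝓝 t] fun s => s ^ 2 := by
      filter_upwards [eventually_gt_nhds h] with s hs
      simp [max_eq_left hs.le]
    rw [max_eq_left h.le]
    have h2 : HasDerivAt (fun s : ℝ => s ^ 2) (2 * t) t := by
      simpa [mul_comm] using hasDerivAt_pow 2 t
    exact h2.congr_of_eventuallyEq this

lemma dvpPhi_hasDerivAt (t : ℝ) : HasDerivAt dvpPhi (dvpPhi' t) t := by
  have h1 : HasDerivAt (fun u : ℝ => Real.sqrt u) (1 / (2 * Real.sqrt (1 + max t 0 ^ 2)))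
      (1 + max t 0 ^ 2) := Real.hasDerivAt_sqrt (ne_of_gt (dvp_sq_pos _))
  have h2 : HasDerivAt (fun s : ℝ => 1 + max s 0 ^ 2) (2 * max t 0) t :=
    (hasDerivAt_maxsq t).const_add 1
  have h3 := (h1.comp t h2).sub_const 1
  refine h3.congr_deriv ?_
  unfold dvpPhi'
  field_simp

lemma dvpPhi'_continuous : Continuous dvpPhi' := by
  unfold dvpPhi'
  exact (continuous_max.comp (continuous_id.prodMk continuous_const) |>.div
    ((Real.continuous_sqrt.comp (by continuity))) (fun t => (dvp_sqrt_pos _).ne'))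

lemma dvpPhi_contDiff : ContDiff ℝ 1 dvpPhi := by
  rw [contDiff_one_iff_deriv]
  refine ⟨fun t => (dvpPhi_hasDerivAt t).differentiableAt, ?_⟩
  have : deriv dvpPhi = dvpPhi' := funext fun t => (dvpPhi_hasDerivAt t).deriv
  rw [this]; exact dvpPhi'_continuous

lemma dvp_r_mono_aux {u v : ℝ} (hu : 0 ≤ u) (huv : u ≤ v) :
    u / Real.sqrt (1 + u ^ 2) ≤ v / Real.sqrt (1 + v ^ 2) := by
  rw [div_le_div_iff₀ (dvp_sqrt_pos u) (dvp_sqrt_pos v)]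
  have hA := Real.sq_sqrt (dvp_sq_pos u).le
  have hB := Real.sq_sqrt (dvp_sq_pos v).le
  have hA0 := (dvp_sqrt_pos u).le
  have hB0 := (dvp_sqrt_pos v).le
  have hv : 0 ≤ v := le_trans hu huv
  refine le_of_pow_le_pow_left₀ two_ne_zero (by positivity) ?_
  have : u ^ 2 ≤ v ^ 2 := by nlinarith
  nlinarith

lemma dvpPhi'_mono : Monotone dvpPhi' := by
  intro s t hst
  exact dvp_r_mono_aux (le_max_right s 0) (max_le_max hst le_rfl)

lemma dvpPhi_convexOn : ConvexOn ℝ univ dvpPhi := by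
  have hd : deriv dvpPhi = dvpPhi' := funext fun t => (dvpPhi_hasDerivAt t).deriv
  refine MonotoneOn.convexOn_of_deriv convex_univ dvpPhi_contDiff.continuous.continuousOn ?_ ?_
  · exact fun t _ => (dvpPhi_hasDerivAt t).differentiableAt.differentiableWithinAt
  · rw [interior_univ, hd]; exact dvpPhi'_mono.monotoneOn _

lemma dvpPhi_nonneg (t : ℝ) : 0 ≤ dvpPhi t := by
  unfold dvpPhi
  have : (1:ℝ) ≤ Real.sqrt (1 + max t 0 ^ 2) :=
    Real.le_sqrt_of_sq_le (by nlinarith [sq_nonneg (max t 0)])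
  linarith

lemma dvpPhi_eq_zero {t : ℝ} (ht : t ≤ 0) : dvpPhi t = 0 := by
  unfold dvpPhi
  rw [max_eq_right ht]
  simp

lemma dvpPhi_le (t : ℝ) : dvpPhi t ≤ max t 0 := by
  unfold dvpPhi
  have h : Real.sqrt (1 + max t 0 ^ 2) ≤ 1 + max t 0 := calc
    Real.sqrt (1 + max t 0 ^ 2) ≤ Real.sqrt ((1 + max t 0) ^ 2) :=
      Real.sqrt_le_sqrt (by nlinarith [le_max_right t 0])
    _ = 1 + max t 0 := Real.sqrt_sq (by positivity)
  linarith

lemma dvpPhi_ge (t : ℝ) : t - 1 ≤ dvpPhi t := by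
  unfold dvpPhi
  have h : max t 0 ≤ Real.sqrt (1 + max t 0 ^ 2) :=
    Real.le_sqrt_of_sq_le (by linarith)
  have := le_max_left t 0
  linarith

lemma dvpPhi_mono : Monotone dvpPhi := by
  intro s t hst
  unfold dvpPhi
  have : max s 0 ^ 2 ≤ max t 0 ^ 2 := by
    have h1 := le_max_right s 0
    have h2 : max s 0 ≤ max t 0 := max_le_max hst le_rfl
    nlinarith
  have := Real.sqrt_le_sqrt (by linarith : 1 + max s 0 ^ 2 ≤ 1 + max t 0 ^ 2)
  linarith

noncomputable def dvpG (s : ℝ) : ℝ := Real.sqrt (1 + s ^ 2) - 1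
noncomputable def dvpG' (s : ℝ) : ℝ := s / Real.sqrt (1 + s ^ 2)

lemma dvpG_hasDerivAt (t : ℝ) : HasDerivAt dvpG (dvpG' t) t := by
  have h1 : HasDerivAt (fun u : ℝ => Real.sqrt u) (1 / (2 * Real.sqrt (1 + t ^ 2)))
      (1 + t ^ 2) := Real.hasDerivAt_sqrt (ne_of_gt (dvp_sq_pos _))
  have h2 : HasDerivAt (fun s : ℝ => 1 + s ^ 2) (2 * t) t := by
    simpa [mul_comm] using (hasDerivAt_pow 2 t).const_add 1
  have h3 := (h1.comp t h2).sub_const 1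
  refine h3.congr_deriv ?_
  unfold dvpG'
  field_simp

lemma dvpG'_strictMono : StrictMono dvpG' := by
  intro u v huv
  unfold dvpG'
  rw [div_lt_div_iff₀ (dvp_sqrt_pos u) (dvp_sqrt_pos v)]
  have hA := Real.sq_sqrt (dvp_sq_pos u).le
  have hB := Real.sq_sqrt (dvp_sq_pos v).le
  have hA0 := dvp_sqrt_pos u
  have hB0 := dvp_sqrt_pos v
  rcases le_or_gt 0 u with hu | hu
  · have hv : 0 < v := lt_of_le_of_lt hu huv
    refine lt_of_pow_lt_pow_left₀ 2 (by positivity) ?_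
    have h2 : u ^ 2 < v ^ 2 := by nlinarith
    nlinarith
  · rcases le_or_gt 0 v with hv | hv
    · have h2 : u * Real.sqrt (1 + v ^ 2) < 0 := mul_neg_of_neg_of_pos hu hB0
      have h3 : 0 ≤ v * Real.sqrt (1 + u ^ 2) := by positivity
      linarith
    · have key : (-v) * Real.sqrt (1 + u ^ 2) < (-u) * Real.sqrt (1 + v ^ 2) := by
        refine lt_of_pow_lt_pow_left₀ 2 (mul_nonneg (by linarith) hB0.le) ?_
        have h2 : v ^ 2 < u ^ 2 := by nlinarith
        nlinarith
      linarith

lemma dvpG_contDiff : ContDiff ℝ 1 dvpG := by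
  rw [contDiff_one_iff_deriv]
  refine ⟨fun t => (dvpG_hasDerivAt t).differentiableAt, ?_⟩
  have hd : deriv dvpG = dvpG' := funext fun t => (dvpG_hasDerivAt t).deriv
  rw [hd]
  unfold dvpG'
  exact continuous_id.div (Real.continuous_sqrt.comp (by continuity))
    (fun t => (dvp_sqrt_pos _).ne')

lemma dvpG_strictConvexOn : StrictConvexOn ℝ univ dvpG := by
  have hd : deriv dvpG = dvpG' := funext fun t => (dvpG_hasDerivAt t).deriv
  exact StrictMono.strictConvexOn_univ_of_deriv dvpG_contDiff.continuous (hd ▸ dvpG'_strictMono)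

lemma dvpG_nonneg (t : ℝ) : 0 ≤ dvpG t := by
  unfold dvpG
  have : (1:ℝ) ≤ Real.sqrt (1 + t ^ 2) := Real.le_sqrt_of_sq_le (by nlinarith [sq_nonneg t])
  linarith

lemma dvpG_zero : dvpG 0 = 0 := by unfold dvpG; simp

lemma dvpG_le {t : ℝ} (ht : 0 ≤ t) : dvpG t ≤ t := by
  unfold dvpG
  have h : Real.sqrt (1 + t ^ 2) ≤ 1 + t := calc
    Real.sqrt (1 + t ^ 2) ≤ Real.sqrt ((1 + t) ^ 2) := Real.sqrt_le_sqrt (by nlinarith)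
    _ = 1 + t := Real.sqrt_sq (by positivity)
  linarith

lemma dvpG_monoOn : MonotoneOn dvpG (Ici 0) := by
  intro s hs t ht hst
  unfold dvpG
  have : s ^ 2 ≤ t ^ 2 := by nlinarith [mem_Ici.1 hs]
  have := Real.sqrt_le_sqrt (by linarith : 1 + s ^ 2 ≤ 1 + t ^ 2)
  linarith

noncomputable def dvpS (c : ℕ → ℝ) (N : ℕ) (s : ℝ) : ℝ :=
  dvpG s + ∑ n ∈ Finset.range N, dvpPhi (s - c n)

noncomputable def dvpPsi (c : ℕ → ℝ) (s : ℝ) : ℝ := dvpG s + ∑' n, dvpPhi (s - c n)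

section
variable {c : ℕ → ℝ}

lemma dvp_hinge_convexOn (a : ℝ) : ConvexOn ℝ univ fun s : ℝ => dvpPhi (s - a) := by
  have h := dvpPhi_convexOn.comp_affineMap (AffineMap.id ℝ ℝ - AffineMap.const ℝ ℝ a)
  exact h

lemma dvp_sum_convexOn (N : ℕ) :
    ConvexOn ℝ univ fun s : ℝ => ∑ n ∈ Finset.range N, dvpPhi (s - c n) := by
  induction N with
  | zero => simpa using convexOn_const (0 : ℝ) convex_univ
  | succ m ih =>
      have heq : (fun s : ℝ => ∑ n ∈ Finset.range (m + 1), dvpPhi (s - c n))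
          = (fun s : ℝ => ∑ n ∈ Finset.range m, dvpPhi (s - c n))
            + fun s : ℝ => dvpPhi (s - c m) := by
        funext s; simpa using Finset.sum_range_succ (fun n => dvpPhi (s - c n)) m
      rw [heq]
      exact ih.add (dvp_hinge_convexOn (c m))

lemma dvpS_contDiff (N : ℕ) : ContDiff ℝ 1 (dvpS c N) := by
  refine dvpG_contDiff.add ?_
  refine ContDiff.sum fun n _ => ?_
  exact dvpPhi_contDiff.comp (contDiff_id.sub contDiff_const)

lemma dvpS_strictConvexOn (N : ℕ) : StrictConvexOn ℝ univ (dvpS c N) := by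
  have h := dvpG_strictConvexOn.add_convexOn (dvp_sum_convexOn (c := c) N)
  exact h

lemma dvpS_monotoneOn (N : ℕ) : MonotoneOn (dvpS c N) (Ici 0) := by
  intro x hx y hy hxy
  unfold dvpS
  have h1 := dvpG_monoOn hx hy hxy
  have h2 : ∀ n ∈ Finset.range N, dvpPhi (x - c n) ≤ dvpPhi (y - c n) :=
    fun n _ => dvpPhi_mono (by linarith)
  have := Finset.sum_le_sum h2
  linarith

variable (hc : ∀ n : ℕ, (n : ℝ) ≤ c n)
include hc

lemma dvp_term_zero {n : ℕ} {s : ℝ} (hs : s ≤ (n : ℝ)) : dvpPhi (s - c n) = 0 :=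
  dvpPhi_eq_zero (by linarith [hc n])

lemma dvp_summable (s : ℝ) : Summable fun n => dvpPhi (s - c n) := by
  refine summable_of_ne_finset_zero (s := Finset.range ⌈s⌉₊) fun n hn => ?_
  rw [Finset.mem_range, not_lt] at hn
  exact dvp_term_zero hc (le_trans (Nat.le_ceil s) (by exact_mod_cast hn))

lemma dvpPsi_eq_S {N : ℕ} {s : ℝ} (hs : s ≤ (N : ℝ)) : dvpPsi c s = dvpS c N s := by
  unfold dvpPsi dvpS
  congr 1
  refine tsum_eq_sum fun n hn => ?_
  rw [Finset.mem_range, not_lt] at hn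
  exact dvp_term_zero hc (le_trans hs (by exact_mod_cast hn))

lemma dvpPsi_contDiff : ContDiff ℝ 1 (dvpPsi c) := by
  rw [contDiff_iff_contDiffAt]
  intro x
  have hx : x < ((⌈x⌉₊ + 1 : ℕ) : ℝ) := by
    push_cast; linarith [Nat.le_ceil x]
  refine ((dvpS_contDiff (c := c) (⌈x⌉₊ + 1)).contDiffAt).congr_of_eventuallyEq ?_
  filter_upwards [eventually_lt_nhds hx] with s hs
  exact dvpPsi_eq_S hc hs.le

lemma dvpPsi_strictConvexOn : StrictConvexOn ℝ (Ici 0) (dvpPsi c) := by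
  refine ⟨convex_Ici 0, fun x hx y hy hxy a b ha hb hab => ?_⟩
  set N : ℕ := ⌈max x y⌉₊ + 1 with hN
  have hxN : x ≤ (N : ℝ) := by
    rw [hN]; push_cast; linarith [Nat.le_ceil (max x y), le_max_left x y]
  have hyN : y ≤ (N : ℝ) := by
    rw [hN]; push_cast; linarith [Nat.le_ceil (max x y), le_max_right x y]
  have hzN : a • x + b • y ≤ (N : ℝ) := by
    have h5 : a • x + b • y ≤ a • (N:ℝ) + b • (N:ℝ) := by
      simp only [smul_eq_mul]
      gcongr
    calc a • x + b • y ≤ a • (N:ℝ) + b • (N:ℝ) := h5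
      _ = (N : ℝ) := by rw [← add_smul, hab, one_smul]
  rw [dvpPsi_eq_S hc hxN, dvpPsi_eq_S hc hyN, dvpPsi_eq_S hc hzN]
  exact (dvpS_strictConvexOn (c := c) N).2 (mem_univ x) (mem_univ y) hxy ha hb hab

lemma dvpPsi_monotoneOn : MonotoneOn (dvpPsi c) (Ici 0) := by
  intro x hx y hy hxy
  set N : ℕ := ⌈y⌉₊ + 1 with hN
  have hyN : y ≤ (N : ℝ) := by rw [hN]; push_cast; linarith [Nat.le_ceil y]
  rw [dvpPsi_eq_S hc (le_trans hxy hyN), dvpPsi_eq_S hc hyN]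
  exact dvpS_monotoneOn (c := c) N hx hy hxy

lemma dvpPsi_nonneg (s : ℝ) : 0 ≤ dvpPsi c s := by
  unfold dvpPsi
  have h1 := dvpG_nonneg s
  have h2 : 0 ≤ ∑' n, dvpPhi (s - c n) := tsum_nonneg fun n => dvpPhi_nonneg _
  linarith

lemma dvpPsi_zero : dvpPsi c 0 = 0 := by
  have h : dvpPsi c 0 = dvpS c 0 0 := dvpPsi_eq_S hc (by norm_num)
  rw [h]
  unfold dvpS
  simp [dvpG_zero]

lemma dvpPsi_lower (N : ℕ) (s : ℝ) :
    (N : ℝ) * s - (∑ n ∈ Finset.range N, (c n + 1)) ≤ dvpPsi c s := by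
  have h1 : ∑ n ∈ Finset.range N, (s - c n - 1) ≤ ∑ n ∈ Finset.range N, dvpPhi (s - c n) :=
    Finset.sum_le_sum fun n _ => by simpa using dvpPhi_ge (s - c n)
  have h2 : ∑ n ∈ Finset.range N, dvpPhi (s - c n) ≤ ∑' n, dvpPhi (s - c n) :=
    Summable.sum_le_tsum _ (fun n _ => dvpPhi_nonneg _) (dvp_summable hc s)
  have h3 : ∑ n ∈ Finset.range N, (s - c n - 1)
      = (N : ℝ) * s - (∑ n ∈ Finset.range N, (c n + 1)) := by
    rw [Finset.sum_sub_distrib, Finset.sum_sub_distrib, Finset.sum_add_distrib]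
    simp [Finset.sum_const, mul_comm]
    ring
  have h4 := dvpG_nonneg s
  unfold dvpPsi
  linarith

lemma dvpPsi_superlinear : Tendsto (fun s => dvpPsi c s / s) atTop atTop := by
  rw [tendsto_atTop]
  intro b
  set N : ℕ := ⌈b⌉₊ + 1 with hN
  have hbN : b + 1 ≤ (N : ℝ) := by rw [hN]; push_cast; linarith [Nat.le_ceil b]
  set K : ℝ := ∑ n ∈ Finset.range N, (c n + 1) with hK
  have hK0 : 0 ≤ K := Finset.sum_nonneg fun n _ => by linarith [hc n, (Nat.cast_nonneg n : (0:ℝ) ≤ n)]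
  filter_upwards [eventually_ge_atTop (max 1 K)] with s hs
  have hs1 : (1:ℝ) ≤ s := le_trans (le_max_left _ _) hs
  have hsK : K ≤ s := le_trans (le_max_right _ _) hs
  have h := dvpPsi_lower hc N s
  rw [le_div_iff₀ (by linarith : (0:ℝ) < s)]
  nlinarith
end

section Meas
variable {Ω : Type*} [MeasurableSpace Ω] {μ : Measure Ω} {f : Ω → ℝ}

lemma dvp_pointwise_hinge {a x : ℝ} (ha : 0 ≤ a) (hx : 0 ≤ x) :
    ENNReal.ofReal (dvpPhi (x - a)) ≤
      ({y : ℝ | a < y}.indicator (fun _ => ENNReal.ofReal x) x) := by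
  rcases lt_or_ge a x with h | h
  · rw [indicator_of_mem (by exact h)]
    refine ENNReal.ofReal_le_ofReal ?_
    refine le_trans (dvpPhi_le _) ?_
    simp only [max_le_iff]
    exact ⟨by linarith, hx⟩
  · rw [indicator_of_notMem (by simpa using h)]
    rw [dvpPhi_eq_zero (by linarith)]
    simp

lemma dvp_hinge_lintegral_le (hf : Measurable f) (hf0 : ∀ ω, 0 ≤ f ω) {a : ℝ} (ha : 0 ≤ a) :
    ∫⁻ ω, ENNReal.ofReal (dvpPhi (f ω - a)) ∂μ
      ≤ ∫⁻ ω in {ω | a < f ω}, ENNReal.ofReal (f ω) ∂μ := by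
  rw [← lintegral_indicator (by exact measurableSet_lt measurable_const hf)]
  refine lintegral_mono fun ω => ?_
  rcases lt_or_ge a (f ω) with h' | h'
  · rw [indicator_of_mem (by exact h' : ω ∈ {ω | a < f ω})]
    refine ENNReal.ofReal_le_ofReal (le_trans (dvpPhi_le _) ?_)
    simp only [max_le_iff]
    exact ⟨by linarith [hf0 ω], hf0 ω⟩
  · rw [indicator_of_notMem (by simpa using h')]
    rw [dvpPhi_eq_zero (by linarith)]
    simp

lemma dvp_psi_lintegral_decomp {c : ℕ → ℝ} (hc : ∀ n : ℕ, (n : ℝ) ≤ c n)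
    (hf : Measurable f) :
    ∫⁻ ω, ENNReal.ofReal (dvpPsi c (f ω)) ∂μ
      = (∫⁻ ω, ENNReal.ofReal (dvpG (f ω)) ∂μ)
        + ∑' n, ∫⁻ ω, ENNReal.ofReal (dvpPhi (f ω - c n)) ∂μ := by
  have hpt : ∀ x : ℝ, ENNReal.ofReal (dvpPsi c x)
      = ENNReal.ofReal (dvpG x) + ∑' n, ENNReal.ofReal (dvpPhi (x - c n)) := by
    intro x
    unfold dvpPsi
    rw [ENNReal.ofReal_add (dvpG_nonneg x) (tsum_nonneg fun n => dvpPhi_nonneg _)]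
    rw [ENNReal.ofReal_tsum_of_nonneg (fun n => dvpPhi_nonneg _) (dvp_summable hc x)]
  have hGm : Measurable fun ω => ENNReal.ofReal (dvpG (f ω)) :=
    ENNReal.measurable_ofReal.comp ((dvpG_contDiff.continuous.measurable).comp hf)
  have hPm : ∀ n : ℕ, Measurable fun ω => ENNReal.ofReal (dvpPhi (f ω - c n)) := fun n =>
    ENNReal.measurable_ofReal.comp ((dvpPhi_contDiff.continuous.measurable).comp
      ((hf.sub measurable_const)))
  calc ∫⁻ ω, ENNReal.ofReal (dvpPsi c (f ω)) ∂μ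
      = ∫⁻ ω, (ENNReal.ofReal (dvpG (f ω))
          + ∑' n, ENNReal.ofReal (dvpPhi (f ω - c n))) ∂μ := by
        congr 1; funext ω; exact hpt (f ω)
    _ = (∫⁻ ω, ENNReal.ofReal (dvpG (f ω)) ∂μ)
          + ∫⁻ ω, ∑' n, ENNReal.ofReal (dvpPhi (f ω - c n)) ∂μ :=
        lintegral_add_left hGm _
    _ = (∫⁻ ω, ENNReal.ofReal (dvpG (f ω)) ∂μ)
          + ∑' n, ∫⁻ ω, ENNReal.ofReal (dvpPhi (f ω - c n)) ∂μ := by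
        rw [lintegral_tsum fun n => (hPm n).aemeasurable]

lemma dvp_G_pointwise (hf0 : ∀ ω, 0 ≤ f ω) (ω : Ω) :
    ENNReal.ofReal (dvpG (f ω)) ≤ ENNReal.ofReal (f ω) :=
  ENNReal.ofReal_le_ofReal (dvpG_le (hf0 ω))

lemma dvp_hinge_pointwise_f (hf0 : ∀ ω, 0 ≤ f ω) {a : ℝ} (ha : 0 ≤ a) (ω : Ω) :
    ENNReal.ofReal (dvpPhi (f ω - a)) ≤ ENNReal.ofReal (f ω) := by
  refine ENNReal.ofReal_le_ofReal (le_trans (dvpPhi_le _) ?_)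
  simp only [max_le_iff]
  exact ⟨by linarith [hf0 ω], hf0 ω⟩

end Meas

lemma dvp_tsum_split (f : ℕ → ℝ≥0∞) (N : ℕ) :
    ∑' n, f n = (∑ n ∈ Finset.range N, f n) + ∑' k, f (k + N) := by
  have h1 : ∑' n, f n = ∑' n, ((if n < N then f n else 0) + if n < N then 0 else f n) := by
    refine tsum_congr fun n => ?_
    by_cases h : n < N <;> simp [h]
  rw [h1, ENNReal.tsum_add]
  congr 1
  · rw [tsum_eq_sum (s := Finset.range N) (fun n hn => by
      simp [Finset.mem_range.not.1 hn])]
    exact Finset.sum_congr rfl fun n hn => by simp [Finset.mem_range.1 hn]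
  · have hinj : Function.Injective fun k : ℕ => k + N := fun a b h => by simpa using h
    have hsupp : Function.support (fun n => if n < N then 0 else f n) ⊆
        Set.range fun k : ℕ => k + N := by
      intro n hn
      by_cases h : n < N
      · simp [h] at hn
      · exact ⟨n - N, by simp; omega⟩
    have := hinj.tsum_eq hsupp (f := fun n => if n < N then 0 else f n)
    rw [← this]
    refine tsum_congr fun k => ?_
    simp [Nat.not_lt.2 (Nat.le_add_left N k)]

lemma dvp_coef_tendsto :
    Tendsto (fun N : ℕ => ((N : ℝ≥0∞) + 3) * (1/2 : ℝ≥0∞) ^ N) atTop (𝓝 0) := by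
  have hre : Tendsto (fun N : ℕ => ((N : ℝ) + 3) * (1/2 : ℝ) ^ N) atTop (𝓝 0) := by
    have h1 : Tendsto (fun N : ℕ => (N : ℝ) * (1/2 : ℝ) ^ N) atTop (𝓝 0) := by
      have := tendsto_pow_const_mul_const_pow_of_lt_one 1 (by norm_num : (0:ℝ) ≤ 1/2)
        (by norm_num : (1/2:ℝ) < 1)
      simpa using this
    have h2 : Tendsto (fun N : ℕ => 3 * (1/2 : ℝ) ^ N) atTop (𝓝 0) := by
      have := (tendsto_pow_atTop_nhds_zero_of_lt_one (by norm_num : (0:ℝ) ≤ 1/2)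
        (by norm_num : (1/2:ℝ) < 1)).const_mul 3
      simpa using this
    have := h1.add h2
    simpa [add_mul] using this
  have heq : (fun N : ℕ => ((N : ℝ≥0∞) + 3) * (1/2 : ℝ≥0∞) ^ N)
      = fun N : ℕ => ENNReal.ofReal (((N : ℝ) + 3) * (1/2 : ℝ) ^ N) := by
    funext N
    rw [ENNReal.ofReal_mul (by positivity), ENNReal.ofReal_pow (by norm_num),
      ENNReal.ofReal_add (by positivity) (by norm_num)]
    have h12 : ENNReal.ofReal (1/2 : ℝ) = 1/2 := by
      rw [ENNReal.ofReal_div_of_pos (by norm_num)]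
      norm_num
    rw [h12]
    norm_num
  rw [heq, show (0 : ℝ≥0∞) = ENNReal.ofReal 0 by simp]
  exact (ENNReal.continuous_ofReal.tendsto 0).comp hre

set_option maxHeartbeats 2000000 in
theorem stmt_5 {Ω : Type*} [MeasurableSpace Ω] (P : Measure Ω) [IsProbabilityMeasure P]
    (H : Set (Ω → ℝ)) (hmeas : ∀ X ∈ H, Measurable X)
    (hui : Tendsto (fun s : ℝ => ⨆ X ∈ H, ∫⁻ ω in {ω | s < |X ω|}, ENNReal.ofReal |X ω| ∂P)
      atTop (𝓝 0)) :
    ∃ ψ : ℝ → ℝ, ContDiffOn ℝ 1 ψ (Ici 0) ∧ StrictConvexOn ℝ (Ici 0) ψ ∧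
      MonotoneOn ψ (Ici 0) ∧ (∀ s ∈ Ici (0 : ℝ), 0 ≤ ψ s) ∧ ψ 0 = 0 ∧
      Tendsto (fun s => ψ s / s) atTop atTop ∧
      (⨆ X ∈ H, ∫⁻ ω, ENNReal.ofReal (ψ |X ω|) ∂P) < ⊤ ∧
      Tendsto (fun s : ℝ => ⨆ X ∈ H, ∫⁻ ω in {ω | s < ψ |X ω|}, ENNReal.ofReal (ψ |X ω|) ∂P)
        atTop (𝓝 0) := by
  set ε : ℝ → ℝ≥0∞ :=
    fun s => ⨆ X ∈ H, ∫⁻ ω in {ω | s < |X ω|}, ENNReal.ofReal |X ω| ∂P with hεdef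
  have hchoice : ∀ n : ℕ, ∃ s₀ : ℝ, ∀ s ≥ s₀, ε s ≤ (1/2 : ℝ≥0∞) ^ n := by
    intro n
    have hpos : (0 : ℝ≥0∞) < (1/2 : ℝ≥0∞) ^ n := by
      apply ENNReal.pow_pos; norm_num
    have h := hui.eventually_lt_const hpos
    rw [eventually_atTop] at h
    obtain ⟨s₀, hs₀⟩ := h
    exact ⟨s₀, fun s hs => (hs₀ s hs).le⟩
  choose d hd using hchoice
  set c : ℕ → ℝ := fun n => max (n : ℝ) (d n) with hcdef
  have hc : ∀ n : ℕ, (n : ℝ) ≤ c n := fun n => le_max_left _ _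
  have hc0 : ∀ n : ℕ, 0 ≤ c n := fun n => le_trans (Nat.cast_nonneg n) (hc n)
  have hεc : ∀ n : ℕ, ε (c n) ≤ (1/2 : ℝ≥0∞) ^ n := fun n => hd n _ (le_max_right _ _)
  -- basic facts about |X|
  have habs : ∀ X ∈ H, Measurable fun ω => |X ω| := fun X hX => (hmeas X hX).abs
  have habs0 : ∀ (X : Ω → ℝ) (ω : Ω), 0 ≤ |X ω| := fun X ω => abs_nonneg _
  -- the set-lintegral of |X| over {a < |X|} is at most ε a
  have hsetle : ∀ (a : ℝ), ∀ X ∈ H,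
      ∫⁻ ω in {ω | a < |X ω|}, ENNReal.ofReal |X ω| ∂P ≤ ε a := by
    intro a X hX
    simp only [hεdef]
    exact le_iSup₂ (f := fun (X : Ω → ℝ) (_ : X ∈ H) =>
      ∫⁻ ω in {ω | a < |X ω|}, ENNReal.ofReal |X ω| ∂P) X hX
  -- uniform first-moment-style bound: ∫ ofReal |X| ≤ ofReal (c 0) + 1
  have hmoment : ∀ X ∈ H,
      ∫⁻ ω, ENNReal.ofReal |X ω| ∂P ≤ ENNReal.ofReal (c 0) + 1 := by
    intro X hX
    have hpt : ∀ ω, ENNReal.ofReal |X ω| ≤ ENNReal.ofReal (c 0)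
        + {ω | c 0 < |X ω|}.indicator (fun ω => ENNReal.ofReal |X ω|) ω := by
      intro ω
      rcases lt_or_ge (c 0) (|X ω|) with h | h
      · rw [indicator_of_mem (by exact h)]
        exact le_add_self
      · rw [indicator_of_notMem (by simpa using h)]
        simpa using ENNReal.ofReal_le_ofReal h
    calc ∫⁻ ω, ENNReal.ofReal |X ω| ∂P
        ≤ ∫⁻ ω, (ENNReal.ofReal (c 0)
            + {ω | c 0 < |X ω|}.indicator (fun ω => ENNReal.ofReal |X ω|) ω) ∂P :=
          lintegral_mono hpt
      _ = ENNReal.ofReal (c 0)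
            + ∫⁻ ω in {ω | c 0 < |X ω|}, ENNReal.ofReal |X ω| ∂P := by
          rw [lintegral_add_left measurable_const,
            lintegral_indicator (measurableSet_lt measurable_const (habs X hX)),
            lintegral_const]
          simp
      _ ≤ ENNReal.ofReal (c 0) + 1 := by
          gcongr
          calc ∫⁻ ω in {ω | c 0 < |X ω|}, ENNReal.ofReal |X ω| ∂P ≤ ε (c 0) :=
              hsetle (c 0) X hX
            _ ≤ (1/2 : ℝ≥0∞) ^ 0 := hεc 0
            _ = 1 := by norm_num
  refine ⟨dvpPsi c, (dvpPsi_contDiff hc).contDiffOn, dvpPsi_strictConvexOn hc,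
    dvpPsi_monotoneOn hc, fun s _ => dvpPsi_nonneg hc s, dvpPsi_zero hc,
    dvpPsi_superlinear hc, ?_, ?_⟩
  · -- finiteness of the sup of integrals
    refine lt_of_le_of_lt (iSup₂_le fun X hX => ?_)
      (show ENNReal.ofReal (c 0) + 1 + 2 < ⊤ by finiteness)
    rw [dvp_psi_lintegral_decomp hc (habs X hX)]
    gcongr
    · exact le_trans (lintegral_mono (dvp_G_pointwise (habs0 X))) (hmoment X hX)
    · calc ∑' n, ∫⁻ ω, ENNReal.ofReal (dvpPhi (|X ω| - c n)) ∂P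
          ≤ ∑' n : ℕ, (1/2 : ℝ≥0∞) ^ n := by
            refine ENNReal.tsum_le_tsum fun n => ?_
            calc ∫⁻ ω, ENNReal.ofReal (dvpPhi (|X ω| - c n)) ∂P
                ≤ ∫⁻ ω in {ω | c n < |X ω|}, ENNReal.ofReal |X ω| ∂P :=
                  dvp_hinge_lintegral_le (habs X hX) (habs0 X) (hc0 n)
              _ ≤ ε (c n) := hsetle (c n) X hX
              _ ≤ (1/2 : ℝ≥0∞) ^ n := hεc n
        _ = 2 := by
            rw [ENNReal.tsum_geometric]
            norm_num
  · -- uniform integrability of the composed family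
    rw [ENNReal.tendsto_nhds_zero]
    intro η hη
    obtain ⟨N, hN⟩ :=
      (dvp_coef_tendsto.eventually_lt_const hη).exists
    filter_upwards [eventually_ge_atTop (dvpPsi c (c N))] with s hs
    refine iSup₂_le fun X hX => ?_
    -- the superlevel set is inside {c N < |X|}
    have hsubset : {ω | s < dvpPsi c |X ω|} ⊆ {ω | c N < |X ω|} := by
      intro ω hω
      simp only [mem_setOf_eq] at hω ⊢
      by_contra hcon
      push_neg at hcon
      have := dvpPsi_monotoneOn hc (mem_Ici.2 (habs0 X ω)) (mem_Ici.2 (hc0 N)) hcon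
      linarith
    set B : Set Ω := {ω | c N < |X ω|} with hBdef
    have hBmeas : MeasurableSet B := measurableSet_lt measurable_const (habs X hX)
    have hres : ∫⁻ ω in B, ENNReal.ofReal |X ω| ∂P ≤ (1/2 : ℝ≥0∞) ^ N :=
      le_trans (hsetle (c N) X hX) (hεc N)
    calc ∫⁻ ω in {ω | s < dvpPsi c |X ω|}, ENNReal.ofReal (dvpPsi c |X ω|) ∂P
        ≤ ∫⁻ ω in B, ENNReal.ofReal (dvpPsi c |X ω|) ∂P := lintegral_mono_set hsubset
      _ = (∫⁻ ω in B, ENNReal.ofReal (dvpG |X ω|) ∂P)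
            + ∑' n, ∫⁻ ω in B, ENNReal.ofReal (dvpPhi (|X ω| - c n)) ∂P :=
          dvp_psi_lintegral_decomp hc (habs X hX)
      _ ≤ (1/2 : ℝ≥0∞) ^ N
            + (((N : ℝ≥0∞)) * (1/2 : ℝ≥0∞) ^ N + 2 * (1/2 : ℝ≥0∞) ^ N) := by
          gcongr
          · exact le_trans (lintegral_mono (dvp_G_pointwise (habs0 X))) hres
          · -- split the series at N
            have hterm_f : ∀ n : ℕ, ∫⁻ ω in B, ENNReal.ofReal (dvpPhi (|X ω| - c n)) ∂P
                ≤ (1/2 : ℝ≥0∞) ^ N := fun n =>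
              le_trans (lintegral_mono fun ω => dvp_hinge_pointwise_f (habs0 X) (hc0 n) ω) hres
            have hterm_n : ∀ n : ℕ, ∫⁻ ω in B, ENNReal.ofReal (dvpPhi (|X ω| - c n)) ∂P
                ≤ (1/2 : ℝ≥0∞) ^ n := by
              intro n
              calc ∫⁻ ω in B, ENNReal.ofReal (dvpPhi (|X ω| - c n)) ∂P
                  ≤ ∫⁻ ω in {ω | c n < |X ω|}, ENNReal.ofReal |X ω| ∂(P.restrict B) :=
                    dvp_hinge_lintegral_le (habs X hX) (habs0 X) (hc0 n)
                _ ≤ ∫⁻ ω in {ω | c n < |X ω|}, ENNReal.ofReal |X ω| ∂P := by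
                    rw [Measure.restrict_restrict
                      (measurableSet_lt measurable_const (habs X hX))]
                    exact lintegral_mono' (Measure.restrict_mono inter_subset_left le_rfl)
                      le_rfl
                _ ≤ ε (c n) := hsetle (c n) X hX
                _ ≤ (1/2 : ℝ≥0∞) ^ n := hεc n
            set T : ℕ → ℝ≥0∞ := fun n => ∫⁻ ω in B, ENNReal.ofReal (dvpPhi (|X ω| - c n)) ∂P
              with hTdef
            calc ∑' n, T n = (∑ n ∈ Finset.range N, T n) + ∑' k, T (k + N) :=
                dvp_tsum_split T N
              _ ≤ (∑ n ∈ Finset.range N, (1/2 : ℝ≥0∞) ^ N)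
                    + ∑' k : ℕ, (1/2 : ℝ≥0∞) ^ (k + N) := by
                  gcongr with n hn k
                  · exact hterm_f n
                  · exact hterm_n (k + N)
              _ = (N : ℝ≥0∞) * (1/2 : ℝ≥0∞) ^ N + 2 * (1/2 : ℝ≥0∞) ^ N := by
                  congr 1
                  · rw [Finset.sum_const, Finset.card_range, nsmul_eq_mul]
                  · have : ∀ k : ℕ, (1/2 : ℝ≥0∞) ^ (k + N)
                        = (1/2 : ℝ≥0∞) ^ k * (1/2 : ℝ≥0∞) ^ N := fun k => pow_add _ _ _
                    rw [tsum_congr this, ENNReal.tsum_mul_right, ENNReal.tsum_geometric]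
                    norm_num
      _ = ((N : ℝ≥0∞) + 3) * (1/2 : ℝ≥0∞) ^ N := by ring
      _ ≤ η := hN.le
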